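/- Let X be a k-self-similar subset of [0,1]^d with k-kernel {X_0,…,X_{n−1}}, X = X_0, and let A_{ij} be the number of (1/k)-scaled grid copies of X_i contained in X_j. Then for every p ≥ 1, the number of closed (1/k^p)-grid hypercubes ∏_i [c_i/k^p,(c_i+1)/k^p] (with 0 ≤ c_i < k^p integers) having nonempty intersection with X equals 𝟙^T · A^p · e_0. -/

import Mathlib

/-- The level-1 piece of `Y ⊆ [0,1]^d` at the grid cube indexed by `c ∈ {0,…,k−1}^d`:
the intersection of `Y` with `∏_i [c_i/k, (c_i+1)/k]`, rescaled back to `[0,1]^d`. -/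
noncomputable def gridPiece (k d : ℕ) (Y : Set (Fin d → ℝ)) (c : Fin d → ℕ) :
    Set (Fin d → ℝ) :=
  (fun x i => (k : ℝ) * x i - (c i : ℝ)) ''
    (Y ∩ Set.Icc (fun i => (c i : ℝ) / (k : ℝ)) (fun i => ((c i : ℝ) + 1) / (k : ℝ)))

lemma gridPiece_nonempty_iff (k d : ℕ) (Y : Set (Fin d → ℝ)) (c : Fin d → ℕ) :
    (gridPiece k d Y c).Nonempty ↔
      (Y ∩ Set.Icc (fun i => (c i : ℝ) / (k : ℝ))
        (fun i => ((c i : ℝ) + 1) / (k : ℝ))).Nonempty := by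
  simp [gridPiece, Set.image_nonempty]

/-- The number of level-`p` grid cubes meeting `Y`. -/
noncomputable def cnt (k d p : ℕ) (Y : Set (Fin d → ℝ)) : ℕ :=
  Nat.card {c : Fin d → ℕ // (∀ i, c i < k ^ p) ∧
    (Y ∩ Set.Icc (fun i => (c i : ℝ) / (k : ℝ) ^ p)
      (fun i => ((c i : ℝ) + 1) / (k : ℝ) ^ p)).Nonempty}

section counting

def finNatEquiv {d m : ℕ} (P : (Fin d → ℕ) → Prop) :
    {c : Fin d → ℕ // (∀ i, c i < m) ∧ P c} ≃
      {c : Fin d → Fin m // P (fun i => (c i : ℕ))} where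
  toFun c := ⟨fun i => ⟨c.1 i, c.2.1 i⟩, c.2.2⟩
  invFun c := ⟨fun i => (c.1 i : ℕ), fun i => (c.1 i).2, c.2⟩
  left_inv _ := rfl
  right_inv _ := rfl

instance finite_bounded {d m : ℕ} (P : (Fin d → ℕ) → Prop) :
    Finite {c : Fin d → ℕ // (∀ i, c i < m) ∧ P c} :=
  Finite.of_equiv _ (finNatEquiv P).symm

lemma card_sigma_eq {ι : Type*} [Fintype ι] (f : ι → Type*) [∀ i, Finite (f i)] :
    Nat.card ((i : ι) × f i) = ∑ i, Nat.card (f i) := by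
  letI : ∀ i, Fintype (f i) := fun i => Fintype.ofFinite _
  rw [Nat.card_eq_fintype_card, Fintype.card_sigma]
  simp [Nat.card_eq_fintype_card]

lemma card_split {d k p : ℕ} (hk : 0 < k) (P : (Fin d → ℕ) → Prop) :
    Nat.card {c : Fin d → ℕ // (∀ i, c i < k ^ (p + 1)) ∧ P c} =
      Nat.card ((c₁ : Fin d → Fin k) × {c₂ : Fin d → ℕ //
        (∀ i, c₂ i < k ^ p) ∧ P (fun i => (c₁ i : ℕ) * k ^ p + c₂ i)}) := by
  have hkp : 0 < k ^ p := pow_pos hk p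
  refine (Nat.card_congr (Equiv.ofBijective
    (fun s => (⟨fun i => (s.1 i : ℕ) * k ^ p + s.2.1 i, fun i => ?_, s.2.2.2⟩ :
      {c : Fin d → ℕ // (∀ i, c i < k ^ (p + 1)) ∧ P c})) ⟨?_, ?_⟩)).symm
  · have h1 : (s.1 i : ℕ) * k ^ p + s.2.1 i < ((s.1 i : ℕ) + 1) * k ^ p := by
      rw [add_mul, one_mul]; exact Nat.add_lt_add_left (s.2.2.1 i) _
    refine lt_of_lt_of_le h1 ?_
    rw [pow_succ, Nat.mul_comm (k ^ p) k]
    exact Nat.mul_le_mul_right _ (s.1 i).2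
  · rintro ⟨c₁, c₂, h2, hP⟩ ⟨c₁', c₂', h2', hP'⟩ h
    have hfun : ∀ i, (c₁ i : ℕ) * k ^ p + c₂ i = (c₁' i : ℕ) * k ^ p + c₂' i := by
      intro i; exact congrFun (congrArg Subtype.val h) i
    have hc1 : c₁ = c₁' := by
      funext i
      have hd : ((c₁ i : ℕ) * k ^ p + c₂ i) / k ^ p = (c₁ i : ℕ) := by
        rw [Nat.mul_comm, Nat.mul_add_div hkp, Nat.div_eq_of_lt (h2 i), Nat.add_zero]
      have hd' : ((c₁' i : ℕ) * k ^ p + c₂' i) / k ^ p = (c₁' i : ℕ) := by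
        rw [Nat.mul_comm, Nat.mul_add_div hkp, Nat.div_eq_of_lt (h2' i), Nat.add_zero]
      apply Fin.ext
      rw [← hd, ← hd', hfun i]
    subst hc1
    have hc2 : c₂ = c₂' := by
      funext i
      have := hfun i
      omega
    subst hc2
    rfl
  · rintro ⟨c, hb, hP⟩
    refine ⟨⟨fun i => ⟨c i / k ^ p, ?_⟩, fun i => c i % k ^ p,
      fun i => Nat.mod_lt _ hkp, ?_⟩, ?_⟩
    · rw [Nat.div_lt_iff_lt_mul hkp]
      calc c i < k ^ (p + 1) := hb i
        _ = k * k ^ p := by rw [pow_succ, Nat.mul_comm]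
    · have : (fun i => (c i / k ^ p) * k ^ p + c i % k ^ p) = c := by
        funext i; rw [Nat.mul_comm]; exact Nat.div_add_mod _ _
      rw [this]; exact hP
    · apply Subtype.ext
      funext i
      show (c i / k ^ p) * k ^ p + c i % k ^ p = c i
      rw [Nat.mul_comm]; exact Nat.div_add_mod _ _

lemma card_nonempty_classified {α β : Type*} [Fintype α] {m : ℕ}
    (S : α → Set β) (T : Fin m → Set β)
    (hne : ∀ i, (T i).Nonempty) (hinj : Function.Injective T)
    (hcl : ∀ a, (S a).Nonempty → ∃ i, S a = T i) :
    Nat.card {a // (S a).Nonempty} = ∑ i, Nat.card {a // S a = T i} := by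
  classical
  set f : {a // (S a).Nonempty} → Fin m := fun a => Classical.choose (hcl a.1 a.2) with hf
  have hspec : ∀ a : {a // (S a).Nonempty}, S a.1 = T (f a) :=
    fun a => Classical.choose_spec (hcl a.1 a.2)
  have h1 : Nat.card {a // (S a).Nonempty} =
      ∑ i, Nat.card {x : {a // (S a).Nonempty} // f x = i} := by
    rw [← Nat.card_congr (Equiv.sigmaFiberEquiv f)]
    exact card_sigma_eq _
  rw [h1]
  refine Finset.sum_congr rfl fun i _ => Nat.card_congr ?_
  refine ⟨fun x => ⟨x.1.1, by have h := hspec x.1; rwa [x.2] at h⟩,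
          fun y => ⟨⟨y.1, by rw [y.2]; exact hne i⟩, ?_⟩, ?_, ?_⟩
  · exact hinj ((hspec ⟨y.1, by rw [y.2]; exact hne i⟩).symm.trans y.2)
  · intro x; apply Subtype.ext; apply Subtype.ext; rfl
  · intro y; rfl

end counting

lemma real_pair_iff (kR m x a b : ℝ) (hm : 0 < m) (hk : 0 < kR) :
    (b / m ≤ kR * x - a ∧ kR * x - a ≤ (b + 1) / m) ↔
      ((a * m + b) / (m * kR) ≤ x ∧ x ≤ (a * m + b + 1) / (m * kR)) := by
  have hmk : 0 < m * kR := by positivity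
  rw [div_le_iff₀ hm, le_div_iff₀ hm, div_le_iff₀ hmk, le_div_iff₀ hmk]
  constructor <;> rintro ⟨h1, h2⟩ <;> constructor <;> nlinarith

lemma key_iff {d k p : ℕ} (hk : 2 ≤ k) (Y : Set (Fin d → ℝ))
    (c₁ c₂ : Fin d → ℕ) (h₂ : ∀ i, c₂ i < k ^ p) :
    (Y ∩ Set.Icc (fun i => (((fun i => c₁ i * k ^ p + c₂ i) i : ℕ) : ℝ) / (k : ℝ) ^ (p + 1))
       (fun i => ((((fun i => c₁ i * k ^ p + c₂ i) i : ℕ) : ℝ) + 1) / (k : ℝ) ^ (p + 1))).Nonempty ↔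
    (gridPiece k d Y c₁ ∩ Set.Icc (fun i => (c₂ i : ℝ) / (k : ℝ) ^ p)
       (fun i => ((c₂ i : ℝ) + 1) / (k : ℝ) ^ p)).Nonempty := by
  have hk0 : (0 : ℝ) < (k : ℝ) := by exact_mod_cast Nat.lt_of_lt_of_le two_pos hk
  have hkp : (0 : ℝ) < (k : ℝ) ^ p := by positivity
  have hkp1 : (0 : ℝ) < (k : ℝ) ^ (p + 1) := by positivity
  set φ : (Fin d → ℝ) → (Fin d → ℝ) := fun x i => (k : ℝ) * x i - (c₁ i : ℝ) with hφ
  set lo : Fin d → ℝ := fun i => ((c₁ i * k ^ p + c₂ i : ℕ) : ℝ) / (k : ℝ) ^ (p + 1) with hlo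
  set hi : Fin d → ℝ := fun i => (((c₁ i * k ^ p + c₂ i : ℕ) : ℝ) + 1) / (k : ℝ) ^ (p + 1) with hhi
  have hcast : ∀ i, ((c₁ i * k ^ p + c₂ i : ℕ) : ℝ) = (c₁ i : ℝ) * (k : ℝ) ^ p + (c₂ i : ℝ) := by
    intro i; push_cast; ring
  have hpre : φ ⁻¹' Set.Icc (fun i => (c₂ i : ℝ) / (k : ℝ) ^ p)
      (fun i => ((c₂ i : ℝ) + 1) / (k : ℝ) ^ p) = Set.Icc lo hi := by
    ext x
    simp only [Set.mem_preimage, Set.mem_Icc, Pi.le_def, hφ, hlo, hhi]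
    rw [← forall_and, ← forall_and]
    refine forall_congr' fun i => ?_
    have := real_pair_iff (k : ℝ) ((k : ℝ) ^ p) (x i) (c₁ i : ℝ) (c₂ i : ℝ) hkp hk0
    rw [hcast i, pow_succ]
    exact this
  have hsub : Set.Icc lo hi ⊆ Set.Icc (fun i => (c₁ i : ℝ) / (k : ℝ))
      (fun i => ((c₁ i : ℝ) + 1) / (k : ℝ)) := by
    intro x hx
    rw [Set.mem_Icc] at hx ⊢
    rw [Pi.le_def, Pi.le_def] at hx ⊢
    obtain ⟨hx1, hx2⟩ := hx
    constructor <;> intro i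
    · have h1 := hx1 i
      simp only [hlo, hcast, pow_succ] at h1
      rw [div_le_iff₀ hk0]
      rw [div_le_iff₀ (by positivity : (0:ℝ) < (k:ℝ)^p * k)] at h1
      have hb : (0 : ℝ) ≤ (c₂ i : ℝ) := Nat.cast_nonneg _
      nlinarith
    · have h1 := hx2 i
      simp only [hhi, hcast, pow_succ] at h1
      rw [le_div_iff₀ hk0]
      rw [le_div_iff₀ (by positivity : (0:ℝ) < (k:ℝ)^p * k)] at h1
      have hb : (c₂ i : ℝ) + 1 ≤ (k : ℝ) ^ p := by
        have h' : c₂ i + 1 ≤ k ^ p := h₂ i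
        exact_mod_cast h'
      nlinarith
  have himg : gridPiece k d Y c₁ ∩ Set.Icc (fun i => (c₂ i : ℝ) / (k : ℝ) ^ p)
      (fun i => ((c₂ i : ℝ) + 1) / (k : ℝ) ^ p) = φ '' (Y ∩ Set.Icc lo hi) := by
    rw [gridPiece, ← Set.image_inter_preimage, hpre]
    rw [Set.inter_assoc, Set.inter_eq_self_of_subset_right hsub]
  rw [himg, Set.image_nonempty]

section mainlemmas

variable {d k n : ℕ} (hk : 2 ≤ k) (Xs : Fin (n + 1) → Set (Fin d → ℝ))
  (hne : ∀ i, (Xs i).Nonempty) (hinj : Function.Injective Xs)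
  (hclosed : ∀ j (c : Fin d → Fin k),
    (gridPiece k d (Xs j) (fun l => (c l : ℕ))).Nonempty →
      ∃ i, gridPiece k d (Xs j) (fun l => (c l : ℕ)) = Xs i)
  (A : Matrix (Fin (n + 1)) (Fin (n + 1)) ℕ)
  (hA : ∀ i j, A i j =
    Nat.card {c : Fin d → Fin k // gridPiece k d (Xs j) (fun l => (c l : ℕ)) = Xs i})

include hk hne hinj hclosed hA

lemma cnt_one (j : Fin (n + 1)) : cnt k d 1 (Xs j) = ∑ i, A i j := by
  classical
  rw [cnt]
  have e1 : {c : Fin d → ℕ // (∀ i, c i < k ^ 1) ∧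
      (Xs j ∩ Set.Icc (fun i => (c i : ℝ) / (k : ℝ) ^ 1)
        (fun i => ((c i : ℝ) + 1) / (k : ℝ) ^ 1)).Nonempty} ≃
      {c : Fin d → Fin k // (gridPiece k d (Xs j) (fun l => (c l : ℕ))).Nonempty} := by
    refine (Equiv.subtypeEquivRight ?_).trans
      (((finNatEquiv (m := k) (fun c => (Xs j ∩ Set.Icc (fun i => (c i : ℝ) / (k : ℝ))
        (fun i => ((c i : ℝ) + 1) / (k : ℝ))).Nonempty)).trans (Equiv.subtypeEquivRight ?_)))
    · intro c; rw [pow_one, pow_one]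
    · intro c; exact (gridPiece_nonempty_iff k d (Xs j) fun l => (c l : ℕ)).symm
  rw [Nat.card_congr e1]
  rw [card_nonempty_classified (fun c : Fin d → Fin k => gridPiece k d (Xs j) fun l => (c l : ℕ))
    Xs hne hinj (hclosed j)]
  exact Finset.sum_congr rfl fun i _ => (hA i j).symm

lemma cnt_succ (p : ℕ) (j : Fin (n + 1)) :
    cnt k d (p + 1) (Xs j) = ∑ i, A i j * cnt k d p (Xs i) := by
  classical
  rw [cnt, card_split (by omega : 0 < k), card_sigma_eq]
  have hterm : ∀ c₁ : Fin d → Fin k,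
      Nat.card {c₂ : Fin d → ℕ // (∀ i, c₂ i < k ^ p) ∧
        (Xs j ∩ Set.Icc
          (fun i => (((fun i => (c₁ i : ℕ) * k ^ p + c₂ i) i : ℕ) : ℝ) / (k : ℝ) ^ (p + 1))
          (fun i => ((((fun i => (c₁ i : ℕ) * k ^ p + c₂ i) i : ℕ) : ℝ) + 1) / (k : ℝ) ^ (p + 1))).Nonempty} =
      ∑ i, if gridPiece k d (Xs j) (fun l => (c₁ l : ℕ)) = Xs i then cnt k d p (Xs i) else 0 := by
    intro c₁
    have e2 : {c₂ : Fin d → ℕ // (∀ i, c₂ i < k ^ p) ∧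
        (Xs j ∩ Set.Icc
          (fun i => (((fun i => (c₁ i : ℕ) * k ^ p + c₂ i) i : ℕ) : ℝ) / (k : ℝ) ^ (p + 1))
          (fun i => ((((fun i => (c₁ i : ℕ) * k ^ p + c₂ i) i : ℕ) : ℝ) + 1) / (k : ℝ) ^ (p + 1))).Nonempty} ≃
        {c₂ : Fin d → ℕ // (∀ i, c₂ i < k ^ p) ∧
          (gridPiece k d (Xs j) (fun l => (c₁ l : ℕ)) ∩ Set.Icc
            (fun i => (c₂ i : ℝ) / (k : ℝ) ^ p)
            (fun i => ((c₂ i : ℝ) + 1) / (k : ℝ) ^ p)).Nonempty} :=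
      Equiv.subtypeEquivRight fun c₂ =>
        and_congr_right fun hb => key_iff hk (Xs j) (fun l => (c₁ l : ℕ)) c₂ hb
    rw [Nat.card_congr e2]
    by_cases hgp : (gridPiece k d (Xs j) (fun l => (c₁ l : ℕ))).Nonempty
    · obtain ⟨i₀, hi₀⟩ := hclosed j c₁ hgp
      rw [hi₀]
      have hrhs : ∀ i, (Xs i₀ = Xs i) = (i₀ = i) := fun i => by
        simp [hinj.eq_iff]
      simp only [hrhs]
      rw [Finset.sum_ite_eq Finset.univ i₀ (fun i => cnt k d p (Xs i))]
      simp [cnt]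
    · have h0 : Nat.card {c₂ : Fin d → ℕ // (∀ i, c₂ i < k ^ p) ∧
          (gridPiece k d (Xs j) (fun l => (c₁ l : ℕ)) ∩ Set.Icc
            (fun i => (c₂ i : ℝ) / (k : ℝ) ^ p)
            (fun i => ((c₂ i : ℝ) + 1) / (k : ℝ) ^ p)).Nonempty} = 0 := by
        rw [Nat.card_eq_zero]
        left
        constructor
        rintro ⟨c₂, _, x, hx1, _⟩
        exact hgp ⟨x, hx1⟩
      rw [h0]
      symm
      refine Finset.sum_eq_zero fun i _ => ?_
      rw [if_neg]
      intro h
      exact hgp (h ▸ hne i)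
  calc (∑ c₁ : Fin d → Fin k, Nat.card {c₂ : Fin d → ℕ // (∀ i, c₂ i < k ^ p) ∧
        (Xs j ∩ Set.Icc
          (fun i => (((fun i => (c₁ i : ℕ) * k ^ p + c₂ i) i : ℕ) : ℝ) / (k : ℝ) ^ (p + 1))
          (fun i => ((((fun i => (c₁ i : ℕ) * k ^ p + c₂ i) i : ℕ) : ℝ) + 1) / (k : ℝ) ^ (p + 1))).Nonempty})
      = ∑ c₁ : Fin d → Fin k, ∑ i,
          if gridPiece k d (Xs j) (fun l => (c₁ l : ℕ)) = Xs i then cnt k d p (Xs i) else 0 :=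
        Finset.sum_congr rfl fun c₁ _ => hterm c₁
    _ = ∑ i, ∑ c₁ : Fin d → Fin k,
          if gridPiece k d (Xs j) (fun l => (c₁ l : ℕ)) = Xs i then cnt k d p (Xs i) else 0 :=
        Finset.sum_comm
    _ = ∑ i, A i j * cnt k d p (Xs i) := by
        refine Finset.sum_congr rfl fun i _ => ?_
        rw [← Finset.sum_filter, Finset.sum_const, smul_eq_mul]
        congr 1
        rw [hA i j, Nat.card_eq_fintype_card, Fintype.card_subtype]

lemma cnt_pow : ∀ p : ℕ, 1 ≤ p → ∀ j, cnt k d p (Xs j) = ∑ i, (A ^ p) i j := by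
  intro p hp
  induction p, hp using Nat.le_induction with
  | base =>
    intro j
    rw [cnt_one hk Xs hne hinj hclosed A hA j]
    simp [pow_one]
  | succ p hp ih =>
    intro j
    rw [cnt_succ hk Xs hne hinj hclosed A hA p j]
    simp only [ih, Finset.mul_sum]
    rw [Finset.sum_comm]
    refine Finset.sum_congr rfl fun i _ => ?_
    rw [pow_succ, Matrix.mul_apply]
    exact Finset.sum_congr rfl fun m _ => Nat.mul_comm _ _

end mainlemmas


/-- Let `X ⊆ [0,1]^d` be `k`-self-similar with `k`-kernel
`{X_0, …, X_n}`, `X = X_0` (each kernel element nonempty, every nonempty level-1 piece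
of a kernel element again a kernel element), and let `A_{ij}` be the number of
`(1/k)`-scaled grid copies of `X_i` contained in `X_j`. Then for every `p ≥ 1`, the
number of closed `(1/k^p)`-grid hypercubes `∏_i [c_i/k^p, (c_i+1)/k^p]`
(`0 ≤ c_i < k^p`) having nonempty intersection with `X` equals `𝟙ᵀ · A^p · e_0`. -/
theorem grid_cube_count_eq_matrix_power {d k n : ℕ} (hk : 2 ≤ k)
    (X : Set (Fin d → ℝ)) (hXc : IsCompact X) (hX1 : X ⊆ Set.Icc 0 1)
    (Xs : Fin (n + 1) → Set (Fin d → ℝ)) (hX0 : Xs 0 = X)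
    (hne : ∀ i, (Xs i).Nonempty)
    (hinj : Function.Injective Xs)
    (hclosed : ∀ j (c : Fin d → Fin k),
      (gridPiece k d (Xs j) (fun l => (c l : ℕ))).Nonempty →
        ∃ i, gridPiece k d (Xs j) (fun l => (c l : ℕ)) = Xs i)
    (A : Matrix (Fin (n + 1)) (Fin (n + 1)) ℕ)
    (hA : ∀ i j, A i j =
      Nat.card {c : Fin d → Fin k // gridPiece k d (Xs j) (fun l => (c l : ℕ)) = Xs i}) :
    ∀ p : ℕ, 1 ≤ p →
      Nat.card {c : Fin d → ℕ // (∀ i, c i < k ^ p) ∧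
          (X ∩ Set.Icc (fun i => (c i : ℝ) / (k : ℝ) ^ p)
            (fun i => ((c i : ℝ) + 1) / (k : ℝ) ^ p)).Nonempty} =
        ∑ i, (A ^ p) i 0 := by
  subst hX0
  intro p hp
  exact cnt_pow hk Xs hne hinj hclosed A hA p hp 0
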